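/- In the birth-death setting, assume α(x) − α(x+1) + β(x+1) − β(x) ≥ 0 for all x ∈ ℕ. Let u : ℕ → (0,∞), define d_u(x,y) = Σ_{k = min(x,y)}^{max(x,y)−1} u(k), fix i ≥ 1, and assume Σ_{j ∈ ℕ} d_u(i,j) π(j) < ∞. For f : ℕ → ℝ with |f(x+1) − f(x)| ≤ u(x) for all x ∈ ℕ, set g_f(i) = Σ_{j ∈ ℕ} f(j) g_j(i) (the series converges absolutely for such f). Then sup{ |g_f(i+1) − g_f(i)| : f with |f(x+1) − f(x)| ≤ u(x) for all x } = |g_{φ_i}(i+1) − g_{φ_i}(i)|, where φ_i(j) = −d_u(i,j). -/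

import Mathlib

open scoped BigOperators

/-- `w(x) = ∏_{y=1}^x α(y−1)/β(y)` (empty product equal to `1`). -/
noncomputable def bdW (a b : ℕ → ℝ) (x : ℕ) : ℝ := ∏ y ∈ Finset.range x, a y / b (y + 1)

/-- The invariant probability measure `π` of the birth-death process:
`π(x) = π(0) ∏_{y=1}^x α(y−1)/β(y)` with `π(0) = (Σ_{x≥0} w(x))⁻¹`. -/
noncomputable def bdPi (a b : ℕ → ℝ) (x : ℕ) : ℝ := bdW a b x / ∑' y : ℕ, bdW a b y

/-- `e_i^+ = (Σ_{k=0}^i π(k)) / (α(i) π(i))`. -/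
noncomputable def ePlus (a b : ℕ → ℝ) (i : ℕ) : ℝ :=
  (∑ k ∈ Finset.range (i + 1), bdPi a b k) / (a i * bdPi a b i)

/-- `e_i^- = (Σ_{k=i}^∞ π(k)) / (β(i) π(i))`. -/
noncomputable def eMinus (a b : ℕ → ℝ) (i : ℕ) : ℝ :=
  (∑' k : ℕ, bdPi a b (i + k)) / (b i * bdPi a b i)

/-- `g_j(0) = 0` and `g_j(i) = π(j)(−e_{i−1}^+ 1_{i≤j} + e_i^- 1_{i≥j+1})` for `i ≥ 1`. -/
noncomputable def gBD (a b : ℕ → ℝ) (j i : ℕ) : ℝ :=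
  if i = 0 then 0
  else bdPi a b j *
    ((if i ≤ j then -ePlus a b (i - 1) else 0) + (if j + 1 ≤ i then eMinus a b i else 0))

section BDaux

variable {a b : ℕ → ℝ}

lemma bdW_pos (ha : ∀ x : ℕ, 0 < a x) (hb : ∀ x : ℕ, 1 ≤ x → 0 < b x) (x : ℕ) :
    0 < bdW a b x :=
  Finset.prod_pos fun y _ => div_pos (ha y) (hb (y + 1) (Nat.succ_le_succ (Nat.zero_le y)))

lemma tsumW_pos (ha : ∀ x : ℕ, 0 < a x) (hb : ∀ x : ℕ, 1 ≤ x → 0 < b x)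
    (hw : Summable (bdW a b)) : 0 < ∑' y : ℕ, bdW a b y := by
  have h0 : bdW a b 0 = 1 := by simp [bdW]
  have := Summable.le_tsum hw 0 (fun j _ => (bdW_pos ha hb j).le)
  linarith

lemma bdPi_pos (ha : ∀ x : ℕ, 0 < a x) (hb : ∀ x : ℕ, 1 ≤ x → 0 < b x)
    (hw : Summable (bdW a b)) (x : ℕ) : 0 < bdPi a b x :=
  div_pos (bdW_pos ha hb x) (tsumW_pos ha hb hw)

lemma summable_bdPi (hw : Summable (bdW a b)) : Summable (bdPi a b) := hw.div_const _

lemma detbal (hb : ∀ x : ℕ, 1 ≤ x → 0 < b x) (x : ℕ) :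
    a x * bdPi a b x = b (x + 1) * bdPi a b (x + 1) := by
  have hbx : b (x + 1) ≠ 0 := (hb (x + 1) (Nat.succ_le_succ (Nat.zero_le x))).ne'
  have hWs : b (x + 1) * bdW a b (x + 1) = a x * bdW a b x := by
    have : bdW a b (x + 1) = bdW a b x * (a x / b (x + 1)) := by
      unfold bdW; rw [Finset.prod_range_succ]
    rw [this]
    field_simp
  simp only [bdPi, ← mul_div_assoc, hWs]

end BDaux

open scoped BigOperators

section BDaux2

variable {a b : ℕ → ℝ}

lemma bma_mono (hmono : ∀ x : ℕ, 0 ≤ a x - a (x + 1) + b (x + 1) - b x) :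
    Monotone fun x => b x - a x := by
  apply monotone_nat_of_le_succ
  intro n
  linarith [hmono n]

lemma sum_pibma (ha : ∀ x : ℕ, 0 < a x) (hb0 : b 0 = 0)
    (hb : ∀ x : ℕ, 1 ≤ x → 0 < b x) (i : ℕ) :
    ∑ k ∈ Finset.range (i + 1), bdPi a b k * (b k - a k) = -(bdPi a b i * a i) := by
  induction i with
  | zero => simp [Finset.sum_range_one, hb0]
  | succ n ih =>
      rw [Finset.sum_range_succ, ih]
      have h := detbal (a := a) hb n
      nlinarith [h]

lemma ePlus_mono (ha : ∀ x : ℕ, 0 < a x) (hb0 : b 0 = 0)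
    (hb : ∀ x : ℕ, 1 ≤ x → 0 < b x) (hw : Summable (bdW a b))
    (hmono : ∀ x : ℕ, 0 ≤ a x - a (x + 1) + b (x + 1) - b x) (i : ℕ) :
    ePlus a b i ≤ ePlus a b (i + 1) := by
  have hpi : ∀ x, 0 < bdPi a b x := bdPi_pos ha hb hw
  have hbpos : 0 < b (i + 1) := hb (i + 1) (Nat.succ_le_succ (Nat.zero_le i))
  rw [ePlus, ePlus, div_le_div_iff₀ (mul_pos (ha i) (hpi i)) (mul_pos (ha (i+1)) (hpi (i+1)))]
  have hdb : a i * bdPi a b i = b (i + 1) * bdPi a b (i + 1) := detbal hb i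
  rw [hdb]
  -- suffices: F i * a (i+1) ≤ F (i+1) * b (i+1), then multiply by π(i+1)
  have key : (∑ k ∈ Finset.range (i + 1), bdPi a b k) * a (i + 1)
      ≤ (∑ k ∈ Finset.range (i + 2), bdPi a b k) * b (i + 1) := by
    have h1 : ∑ k ∈ Finset.range (i + 1), bdPi a b k * (b k - a k)
        ≤ ∑ k ∈ Finset.range (i + 1), bdPi a b k * (b (i + 1) - a (i + 1)) := by
      apply Finset.sum_le_sum
      intro k hk
      have hk' : k ≤ i + 1 := le_trans (Nat.lt_succ_iff.mp (Finset.mem_range.mp hk)) (Nat.le_succ i)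
      exact mul_le_mul_of_nonneg_left (bma_mono hmono hk') (hpi k).le
    rw [sum_pibma ha hb0 hb i] at h1
    have h2 : ∑ k ∈ Finset.range (i + 1), bdPi a b k * (b (i + 1) - a (i + 1))
        = (∑ k ∈ Finset.range (i + 1), bdPi a b k) * (b (i + 1) - a (i + 1)) := by
      rw [Finset.sum_mul]
    rw [h2] at h1
    have h3 : bdPi a b i * a i = b (i + 1) * bdPi a b (i + 1) := by
      rw [← detbal hb i]; ring
    rw [Finset.sum_range_succ (n := i + 1)]
    nlinarith [hpi (i + 1)]
  calc (∑ k ∈ Finset.range (i + 1), bdPi a b k) * (a (i + 1) * bdPi a b (i + 1))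
      = ((∑ k ∈ Finset.range (i + 1), bdPi a b k) * a (i + 1)) * bdPi a b (i + 1) := by ring
    _ ≤ ((∑ k ∈ Finset.range (i + 2), bdPi a b k) * b (i + 1)) * bdPi a b (i + 1) :=
        mul_le_mul_of_nonneg_right key (hpi (i + 1)).le
    _ = (∑ k ∈ Finset.range (i + 1 + 1), bdPi a b k) * (b (i + 1) * bdPi a b (i + 1)) := by ring

end BDaux2

section BDaux3

variable {a b : ℕ → ℝ}

lemma summable_tail (hw : Summable (bdW a b)) (i : ℕ) :
    Summable fun k => bdPi a b (i + k) := by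
  have h := (summable_nat_add_iff i).2 (summable_bdPi hw)
  exact h.congr fun k => by rw [Nat.add_comm]

lemma G_rec (hw : Summable (bdW a b)) (i : ℕ) :
    (∑' k, bdPi a b (i + k)) = bdPi a b i + ∑' k, bdPi a b (i + 1 + k) := by
  rw [Summable.tsum_eq_zero_add (summable_tail hw i), Nat.add_zero]
  congr 1
  exact tsum_congr fun k => by rw [show i + (k + 1) = i + 1 + k from by omega]

lemma tele (hb : ∀ x : ℕ, 1 ≤ x → 0 < b x) (i : ℕ) (N : ℕ) :
    ∑ k ∈ Finset.range N, bdPi a b (i + 1 + k) * (a (i + 1 + k) - b (i + 1 + k))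
      = bdPi a b (i + N) * a (i + N) - bdPi a b i * a i := by
  induction N with
  | zero => simp
  | succ n ih =>
      rw [Finset.sum_range_succ, ih]
      have h := detbal (a := a) hb (i + n)
      have e1 : i + 1 + n = i + n + 1 := by omega
      have e2 : i + (n + 1) = i + n + 1 := by omega
      rw [e1, e2]
      nlinarith [h]

lemma G_nonneg (ha : ∀ x : ℕ, 0 < a x) (hb : ∀ x : ℕ, 1 ≤ x → 0 < b x)
    (hw : Summable (bdW a b)) (i : ℕ) : 0 ≤ ∑' k, bdPi a b (i + k) :=
  tsum_nonneg fun k => (bdPi_pos ha hb hw (i + k)).le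

lemma eMinus_anti (ha : ∀ x : ℕ, 0 < a x) (hb0 : b 0 = 0)
    (hb : ∀ x : ℕ, 1 ≤ x → 0 < b x) (hw : Summable (bdW a b))
    (hmono : ∀ x : ℕ, 0 ≤ a x - a (x + 1) + b (x + 1) - b x) (i : ℕ) (hi : 1 ≤ i) :
    eMinus a b (i + 1) ≤ eMinus a b i := by
  have hpi : ∀ x, 0 < bdPi a b x := bdPi_pos ha hb hw
  set G1 : ℝ := ∑' k, bdPi a b (i + 1 + k) with hG1
  -- claim : -(bdPi a b i * a i) ≤ G1 * (a i - b i)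
  have claim : -(bdPi a b i * a i) ≤ (a i - b i) * G1 := by
    have hS : HasSum (fun k => (a i - b i) * bdPi a b (i + 1 + k)) ((a i - b i) * G1) :=
      (summable_tail hw (i + 1)).hasSum.mul_left _
    refine ge_of_tendsto' hS.tendsto_sum_nat fun N => ?_
    have hlow : ∑ k ∈ Finset.range N, bdPi a b (i + 1 + k) * (a (i + 1 + k) - b (i + 1 + k))
        ≤ ∑ k ∈ Finset.range N, (a i - b i) * bdPi a b (i + 1 + k) := by
      apply Finset.sum_le_sum
      intro k _
      have hm : b i - a i ≤ b (i + 1 + k) - a (i + 1 + k) := bma_mono hmono (by omega)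
      nlinarith [hpi (i + 1 + k)]
    rw [tele hb i N] at hlow
    nlinarith [hpi (i + N), ha (i + N), (hpi (i+N)).le, mul_pos (hpi (i+N)) (ha (i+N))]
  have hGrec := G_rec hw i
  have hdb : a i * bdPi a b i = b (i + 1) * bdPi a b (i + 1) := detbal hb i
  rw [eMinus, eMinus, ← hG1, div_le_div_iff₀
    (mul_pos (hb (i + 1) (by omega)) (hpi (i + 1))) (mul_pos (hb i hi) (hpi i)), ← hdb, hGrec]
  have hbi := hb i hi
  nlinarith [hpi i, ha i, mul_pos (hpi i) (ha i)]

lemma ePlus_nonneg (ha : ∀ x : ℕ, 0 < a x) (hb : ∀ x : ℕ, 1 ≤ x → 0 < b x)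
    (hw : Summable (bdW a b)) (i : ℕ) : 0 ≤ ePlus a b i := by
  have hpi : ∀ x, 0 < bdPi a b x := bdPi_pos ha hb hw
  exact le_of_lt (div_pos (Finset.sum_pos (fun k _ => hpi k) (by simp)) (mul_pos (ha i) (hpi i)))

lemma eMinus_nonneg (ha : ∀ x : ℕ, 0 < a x) (hb0 : b 0 = 0)
    (hb : ∀ x : ℕ, 1 ≤ x → 0 < b x) (hw : Summable (bdW a b)) (i : ℕ) :
    0 ≤ eMinus a b i := by
  rcases Nat.eq_zero_or_pos i with h | h
  · simp [eMinus, h, hb0]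
  · have hle : bdPi a b (i + 0) ≤ ∑' k, bdPi a b (i + k) :=
      Summable.le_tsum (summable_tail hw i) 0 fun j _ => (bdPi_pos ha hb hw (i + j)).le
    have hp0 := bdPi_pos ha hb hw (i + 0)
    exact le_of_lt (div_pos (by linarith) (mul_pos (hb i h) (bdPi_pos ha hb hw i)))

lemma gBD_abs_le (ha : ∀ x : ℕ, 0 < a x) (hb0 : b 0 = 0)
    (hb : ∀ x : ℕ, 1 ≤ x → 0 < b x) (hw : Summable (bdW a b)) (i j : ℕ) :
    |gBD a b j i| ≤ bdPi a b j * (ePlus a b (i - 1) + eMinus a b i) := by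
  have hpi : ∀ x, 0 < bdPi a b x := bdPi_pos ha hb hw
  have h1 := ePlus_nonneg ha hb hw (i - 1)
  have h2 := eMinus_nonneg ha hb0 hb hw i
  rcases eq_or_ne i 0 with h | h
  · simp only [gBD, if_pos h, abs_zero]
    exact mul_nonneg (bdPi_pos ha hb hw j).le (by linarith)
  rw [gBD, if_neg h, abs_mul, abs_of_pos (hpi j)]
  rcases le_or_gt i j with hij | hij
  · rw [if_pos hij, if_neg (by omega)]
    rw [add_zero, abs_neg, abs_of_nonneg h1]
    nlinarith [hpi j]
  · rw [if_neg (by omega), if_pos (by omega), zero_add, abs_of_nonneg h2]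
    nlinarith [hpi j]

lemma summable_gBD (ha : ∀ x : ℕ, 0 < a x) (hb0 : b 0 = 0)
    (hb : ∀ x : ℕ, 1 ≤ x → 0 < b x) (hw : Summable (bdW a b)) (i : ℕ) :
    Summable fun j => |gBD a b j i| := by
  apply Summable.of_nonneg_of_le (fun j => abs_nonneg _) (gBD_abs_le ha hb0 hb hw i)
  exact (summable_bdPi hw).mul_right _

lemma tsum_gBD_zero (ha : ∀ x : ℕ, 0 < a x) (hb0 : b 0 = 0)
    (hb : ∀ x : ℕ, 1 ≤ x → 0 < b x) (hw : Summable (bdW a b)) (i : ℕ) (hi : 1 ≤ i) :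
    ∑' j, gBD a b j i = 0 := by
  have hpi : ∀ x, 0 < bdPi a b x := bdPi_pos ha hb hw
  have hsummable : Summable fun j => gBD a b j i := (summable_gBD ha hb0 hb hw i).of_abs
  have hsplit := (Summable.sum_add_tsum_nat_add (f := fun j => gBD a b j i) i hsummable).symm
  rw [hsplit]
  have hne : i ≠ 0 := by omega
  have h1 : ∀ j ∈ Finset.range i, gBD a b j i = bdPi a b j * eMinus a b i := by
    intro j hj
    have hj' : j < i := Finset.mem_range.mp hj
    rw [gBD, if_neg hne, if_neg (by omega), if_pos (by omega), zero_add]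
  have h2 : ∀ k : ℕ, gBD a b (k + i) i = bdPi a b (k + i) * (-ePlus a b (i - 1)) := by
    intro k
    rw [gBD, if_neg hne, if_pos (by omega), if_neg (by omega), add_zero]
  rw [Finset.sum_congr rfl h1, tsum_congr h2]
  rw [← Finset.sum_mul, tsum_mul_right]
  have h3 : (∑' k, bdPi a b (k + i)) = ∑' k, bdPi a b (i + k) :=
    tsum_congr fun k => by rw [Nat.add_comm]
  rw [h3]
  have hdb : a (i - 1) * bdPi a b (i - 1) = b i * bdPi a b i := by
    have := detbal (a := a) hb (i - 1)
    rwa [show i - 1 + 1 = i from by omega] at this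
  have hE : eMinus a b i = (∑' k, bdPi a b (i + k)) / (b i * bdPi a b i) := rfl
  have hP : ePlus a b (i - 1) = (∑ k ∈ Finset.range i, bdPi a b k) / (a (i - 1) * bdPi a b (i - 1)) := by
    rw [ePlus, show i - 1 + 1 = i from by omega]
  rw [hE, hP, hdb]
  field_simp
  simp

end BDaux3

section DUaux

variable {a b : ℕ → ℝ}

lemma lip_le {u f : ℕ → ℝ} (hf : ∀ x : ℕ, |f (x + 1) - f x| ≤ u x) :
    ∀ x y : ℕ, x ≤ y → |f y - f x| ≤ ∑ k ∈ Finset.Ico x y, u k := by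
  intro x y hxy
  induction y, hxy using Nat.le_induction with
  | base => simp
  | succ n hn ih =>
      rw [Finset.sum_Ico_succ_top hn]
      have h1 := hf n
      have h2 := abs_sub_le (f (n + 1)) (f n) (f x)
      linarith

lemma du_bound {u f : ℕ → ℝ} {du : ℕ → ℕ → ℝ}
    (hdu : ∀ x y : ℕ, du x y = ∑ k ∈ Finset.Ico (min x y) (max x y), u k)
    (hf : ∀ x : ℕ, |f (x + 1) - f x| ≤ u x) (x y : ℕ) : |f y - f x| ≤ du x y := by
  rcases le_total x y with h | h
  · rw [hdu x y, min_eq_left h, max_eq_right h]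
    exact lip_le hf x y h
  · rw [hdu x y, min_eq_right h, max_eq_left h, abs_sub_comm]
    exact lip_le hf y x h

lemma du_self {u : ℕ → ℝ} {du : ℕ → ℕ → ℝ}
    (hdu : ∀ x y : ℕ, du x y = ∑ k ∈ Finset.Ico (min x y) (max x y), u k) (i : ℕ) :
    du i i = 0 := by
  rw [hdu]; simp

lemma du_nonneg {u : ℕ → ℝ} {du : ℕ → ℕ → ℝ} (hu : ∀ x : ℕ, 0 < u x)
    (hdu : ∀ x y : ℕ, du x y = ∑ k ∈ Finset.Ico (min x y) (max x y), u k) (x y : ℕ) :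
    0 ≤ du x y := by
  rw [hdu]
  exact Finset.sum_nonneg fun k _ => (hu k).le

lemma phi_lip {u : ℕ → ℝ} {du : ℕ → ℕ → ℝ} (hu : ∀ x : ℕ, 0 < u x)
    (hdu : ∀ x y : ℕ, du x y = ∑ k ∈ Finset.Ico (min x y) (max x y), u k) (i : ℕ) :
    ∀ x : ℕ, |(-du i (x + 1)) - (-du i x)| ≤ u x := by
  intro x
  have he : -du i (x + 1) - -du i x = du i x - du i (x + 1) := by ring
  rw [he]
  rcases le_or_gt (x + 1) i with h | h
  · have h1 : du i x = ∑ k ∈ Finset.Ico x i, u k := by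
      rw [hdu, min_eq_right (by omega), max_eq_left (by omega)]
    have h2 : du i (x + 1) = ∑ k ∈ Finset.Ico (x + 1) i, u k := by
      rw [hdu, min_eq_right h, max_eq_left h]
    rw [h1, h2, Finset.sum_eq_sum_Ico_succ_bot (by omega : x < i)]
    simp [abs_of_nonneg (hu x).le]
  · have h1 : du i x = ∑ k ∈ Finset.Ico i x, u k := by
      rw [hdu, min_eq_left (by omega), max_eq_right (by omega)]
    have h2 : du i (x + 1) = ∑ k ∈ Finset.Ico i (x + 1), u k := by
      rw [hdu, min_eq_left (by omega), max_eq_right (by omega)]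
    rw [h1, h2, Finset.sum_Ico_succ_top (by omega : i ≤ x)]
    simp [abs_of_nonneg (hu x).le]

lemma summable_f_gBD (ha : ∀ x : ℕ, 0 < a x) (hb0 : b 0 = 0)
    (hb : ∀ x : ℕ, 1 ≤ x → 0 < b x) (hw : Summable (bdW a b))
    {u : ℕ → ℝ} (hu : ∀ x : ℕ, 0 < u x) {du : ℕ → ℕ → ℝ}
    (hdu : ∀ x y : ℕ, du x y = ∑ k ∈ Finset.Ico (min x y) (max x y), u k)
    (i : ℕ) (hsum : Summable fun j : ℕ => du i j * bdPi a b j)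
    (m : ℕ) {f : ℕ → ℝ} (hf : ∀ x : ℕ, |f (x + 1) - f x| ≤ u x) :
    Summable fun j => |f j * gBD a b j m| := by
  set C := ePlus a b (m - 1) + eMinus a b m with hCdef
  have hC : 0 ≤ C := add_nonneg (ePlus_nonneg ha hb hw _) (eMinus_nonneg ha hb0 hb hw _)
  have hmajsum : Summable fun j => |f i| * (bdPi a b j * C) + (du i j * bdPi a b j) * C :=
    (((summable_bdPi hw).mul_right C).mul_left _).add (hsum.mul_right C)
  apply Summable.of_nonneg_of_le (fun j => abs_nonneg _) (fun j => ?_) hmajsum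
  have h1 : |f j| ≤ |f i| + du i j := by
    have := du_bound hdu hf i j
    have h2 := abs_sub_abs_le_abs_sub (f j) (f i)
    linarith
  have h2 : |gBD a b j m| ≤ bdPi a b j * C := gBD_abs_le ha hb0 hb hw m j
  have h3 : |f j * gBD a b j m| = |f j| * |gBD a b j m| := abs_mul _ _
  have h4 : |f j| * |gBD a b j m| ≤ (|f i| + du i j) * (bdPi a b j * C) :=
    mul_le_mul h1 h2 (abs_nonneg _) (add_nonneg (abs_nonneg _) (du_nonneg hu hdu i j))
  have h5 : (|f i| + du i j) * (bdPi a b j * C)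
      = |f i| * (bdPi a b j * C) + (du i j * bdPi a b j) * C := by ring
  linarith [h4, h3.le, h3.ge]

end DUaux

/-- Argmax of the pointwise Stein factor for `d_u`-Lipschitz functions, where
`g_f(i) = Σ_j f(j) g_j(i)` (the series converges absolutely for such `f`):
under the monotonicity condition,
`sup{|g_f(i+1) − g_f(i)| : f d_u-Lipschitz} = |g_{φ_i}(i+1) − g_{φ_i}(i)|` with
`φ_i = −d_u(i,·)`. -/
theorem argmax_pointwise_stein_factor_lipschitz (a b : ℕ → ℝ)
    (ha : ∀ x : ℕ, 0 < a x) (hb0 : b 0 = 0) (hb : ∀ x : ℕ, 1 ≤ x → 0 < b x)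
    (hw : Summable (bdW a b))
    (hmono : ∀ x : ℕ, 0 ≤ a x - a (x + 1) + b (x + 1) - b x)
    (u : ℕ → ℝ) (hu : ∀ x : ℕ, 0 < u x)
    (du : ℕ → ℕ → ℝ)
    (hdu : ∀ x y : ℕ, du x y = ∑ k ∈ Finset.Ico (min x y) (max x y), u k)
    (i : ℕ) (hi : 1 ≤ i)
    (hsum : Summable fun j : ℕ => du i j * bdPi a b j) :
    (∀ f : ℕ → ℝ, (∀ x : ℕ, |f (x + 1) - f x| ≤ u x) →
      (Summable fun j : ℕ => |f j * gBD a b j i|) ∧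
      (Summable fun j : ℕ => |f j * gBD a b j (i + 1)|)) ∧
    IsGreatest
      {M : ℝ | ∃ f : ℕ → ℝ, (∀ x : ℕ, |f (x + 1) - f x| ≤ u x) ∧
        M = |(∑' j : ℕ, f j * gBD a b j (i + 1)) - ∑' j : ℕ, f j * gBD a b j i|}
      (|(∑' j : ℕ, -du i j * gBD a b j (i + 1)) -
        ∑' j : ℕ, -du i j * gBD a b j i|) := by
  have hpi : ∀ x, 0 < bdPi a b x := bdPi_pos ha hb hw
  refine ⟨fun f hf => ⟨summable_f_gBD ha hb0 hb hw hu hdu i hsum i hf,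
      summable_f_gBD ha hb0 hb hw hu hdu i hsum (i + 1) hf⟩, ?_, ?_⟩
  case _ =>
    exact ⟨fun j => -du i j, phi_lip hu hdu i, rfl⟩
  case _ =>
    set c : ℕ → ℝ := fun j => gBD a b j (i + 1) - gBD a b j i with hc
    have hS1 : Summable fun j => gBD a b j (i + 1) := (summable_gBD ha hb0 hb hw (i + 1)).of_abs
    have hS0 : Summable fun j => gBD a b j i := (summable_gBD ha hb0 hb hw i).of_abs
    have hcs : Summable c := hS1.sub hS0
    have hc0 : ∑' j, c j = 0 := by
      rw [hc, Summable.tsum_sub hS1 hS0, tsum_gBD_zero ha hb0 hb hw (i + 1) (by omega),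
        tsum_gBD_zero ha hb0 hb hw i hi, sub_zero]
    have hcsign : ∀ j : ℕ, j ≠ i → c j ≤ 0 := by
      intro j hj
      show gBD a b j (i + 1) - gBD a b j i ≤ 0
      rcases lt_or_gt_of_ne hj with h | h
      · have e1 : gBD a b j i = bdPi a b j * eMinus a b i := by
          rw [gBD, if_neg (by omega), if_neg (by omega), if_pos (by omega), zero_add]
        have e2 : gBD a b j (i + 1) = bdPi a b j * eMinus a b (i + 1) := by
          rw [gBD, if_neg (by omega), if_neg (by omega), if_pos (by omega), zero_add]
        have hA := eMinus_anti ha hb0 hb hw hmono i hi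
        rw [e1, e2]
        nlinarith [hpi j]
      · have e1 : gBD a b j i = bdPi a b j * (-ePlus a b (i - 1)) := by
          rw [gBD, if_neg (by omega), if_pos (by omega), if_neg (by omega), add_zero]
        have e2 : gBD a b j (i + 1) = bdPi a b j * (-ePlus a b i) := by
          rw [gBD, if_neg (by omega), if_pos (by omega), if_neg (by omega), add_zero,
            Nat.add_sub_cancel]
        have hP : ePlus a b (i - 1) ≤ ePlus a b i := by
          have := ePlus_mono ha hb0 hb hw hmono (i - 1)
          rwa [show i - 1 + 1 = i from by omega] at this
        rw [e1, e2]
        nlinarith [hpi j]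
    have key : ∀ f : ℕ → ℝ, (∀ x, |f (x + 1) - f x| ≤ u x) →
        (∑' j, f j * gBD a b j (i + 1)) - (∑' j, f j * gBD a b j i)
          = ∑' j, (f j - f i) * c j := by
      intro f hf
      have S1 : Summable fun j => f j * gBD a b j (i + 1) :=
        (summable_f_gBD ha hb0 hb hw hu hdu i hsum (i + 1) hf).of_abs
      have S0 : Summable fun j => f j * gBD a b j i :=
        (summable_f_gBD ha hb0 hb hw hu hdu i hsum i hf).of_abs
      have Sc : Summable fun j => f j * c j :=
        (S1.sub S0).congr fun j => by show _ = _; simp only [hc]; ring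
      rw [← Summable.tsum_sub S1 S0, tsum_congr
        (fun j => show f j * gBD a b j (i + 1) - f j * gBD a b j i = f j * c j by
          simp only [hc]; ring)]
      rw [tsum_congr (fun j => show (f j - f i) * c j = f j * c j - f i * c j by ring),
        Summable.tsum_sub Sc (hcs.mul_left (f i)), tsum_mul_left, hc0, mul_zero, sub_zero]
    have hφ := phi_lip hu hdu i
    have Sφ1 : Summable fun j => |(-du i j) * gBD a b j (i + 1)| :=
      summable_f_gBD ha hb0 hb hw hu hdu i hsum (i + 1) hφ
    have Sφ0 : Summable fun j => |(-du i j) * gBD a b j i| :=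
      summable_f_gBD ha hb0 hb hw hu hdu i hsum i hφ
    have hmnn : ∀ j, 0 ≤ du i j * (-c j) := by
      intro j
      rcases eq_or_ne j i with h | h
      · subst h; rw [du_self hdu]; simp
      · exact mul_nonneg (du_nonneg hu hdu i j) (by linarith [hcsign j h])
    have Smaj : Summable fun j => du i j * (-c j) := by
      apply Summable.of_nonneg_of_le hmnn (fun j => ?_) (Sφ1.add Sφ0)
      calc du i j * (-c j) = -(du i j * c j) := by ring
        _ ≤ |du i j * c j| := neg_le_abs _
        _ = |(-du i j) * gBD a b j (i + 1) - (-du i j) * gBD a b j i| := by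
            rw [show (-du i j) * gBD a b j (i + 1) - (-du i j) * gBD a b j i
              = -(du i j * c j) by simp only [hc]; ring, abs_neg]
        _ ≤ |(-du i j) * gBD a b j (i + 1)| + |(-du i j) * gBD a b j i| :=
            abs_sub _ _
    have hTφ : (∑' j, -du i j * gBD a b j (i + 1)) - ∑' j, -du i j * gBD a b j i
        = ∑' j, du i j * (-c j) := by
      have hk := key (fun j => -du i j) hφ
      rw [hk]
      exact tsum_congr fun j => by rw [du_self hdu]; ring
    rintro M ⟨f, hf, rfl⟩
    rw [key f hf, hTφ, abs_of_nonneg (tsum_nonneg hmnn)]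
    have hmaj : ∀ j, |(f j - f i) * c j| ≤ du i j * (-c j) := by
      intro j
      rcases eq_or_ne j i with h | h
      · subst h; rw [du_self hdu]; simp
      · have h1 : |f j - f i| ≤ du i j := du_bound hdu hf i j
        have h2 : |c j| = -c j := abs_of_nonpos (hcsign j h)
        rw [abs_mul, h2]
        exact mul_le_mul_of_nonneg_right h1 (by linarith [hcsign j h])
    have Sabs : Summable fun j => |(f j - f i) * c j| :=
      Summable.of_nonneg_of_le (fun j => abs_nonneg _) hmaj Smaj
    have Sn : Summable fun j => ‖(f j - f i) * c j‖ := by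
      simpa only [Real.norm_eq_abs] using Sabs
    have habs : ‖∑' j, (f j - f i) * c j‖ ≤ ∑' j, ‖(f j - f i) * c j‖ :=
      norm_tsum_le_tsum_norm Sn
    simp only [Real.norm_eq_abs] at habs
    calc |∑' j, (f j - f i) * c j| ≤ ∑' j, |(f j - f i) * c j| := habs
      _ ≤ ∑' j, du i j * (-c j) := Summable.tsum_le_tsum hmaj Sabs Smaj
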